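/- Let p and q be discrete probability distributions on a common support, mutually absolutely continuous, let d(x) = log(p(x)/q(x)), and let X_1, ..., X_N be i.i.d. with distribution p and Y_1, ..., Y_N be i.i.d. with distribution q, all mutually independent. Then P( Σ_{i=1}^N d(Y_i) − Σ_{i=1}^N d(X_i) ≥ 0 ) ≤ exp(−N I), where I = −2 log Σ_ℓ √(p(ℓ) q(ℓ)) is the Renyi divergence of order 1/2 between p and q. -/

import Mathlib

/-!
STATEMENT 12: Chernoff bound. For mutually absolutely continuous discrete distributions
`p`, `q` with `d(x) = log(p x / q x)`, if `X_1, …, X_N` are i.i.d. `∼ p` and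
`Y_1, …, Y_N` are i.i.d. `∼ q`, all independent, then
`P(∑ d(Y_i) − ∑ d(X_i) ≥ 0) ≤ exp(−N I)`, where `I = −2 log ∑_ℓ √(p ℓ · q ℓ)`.
-/

open MeasureTheory Filter
open scoped ENNReal

namespace Chernoff12

/-- The log-likelihood ratio `d(x) = log (p x / q x)`. -/
noncomputable def d (p q : PMF ℕ) (x : ℕ) : ℝ :=
  Real.log ((p x).toReal / (q x).toReal)

/-- The joint law of `(X_1, …, X_N, Y_1, …, Y_N)` with the `X_i` i.i.d. `∼ p`, the
`Y_i` i.i.d. `∼ q`, and everything independent. -/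
noncomputable def jointLaw (N : ℕ) (p q : PMF ℕ) :
    Measure ((Fin N → ℕ) × (Fin N → ℕ)) :=
  (Measure.pi fun _ : Fin N => p.toMeasure).prod (Measure.pi fun _ : Fin N => q.toMeasure)

/-- The Renyi divergence of order 1/2 between two discrete distributions on ℕ. -/
noncomputable def renyi (p q : PMF ℕ) : ℝ :=
  -2 * Real.log (∑' ℓ : ℕ, Real.sqrt ((p ℓ).toReal * (q ℓ).toReal))

/-- Key real computation : `exp (½ log (a/b)) * b = √(a b)`. -/
lemma exp_half_log_mul {a b : ℝ} (ha : 0 ≤ a) (hb : 0 ≤ b) (h : a = 0 → b = 0) :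
    Real.exp (2⁻¹ * Real.log (a / b)) * b = Real.sqrt (a * b) := by
  rcases eq_or_lt_of_le hb with hb0 | hb0
  · rw [← hb0, mul_zero, mul_zero, Real.sqrt_zero]
  have ha0 : 0 < a := by
    rcases eq_or_lt_of_le ha with ha0 | ha0
    · exact absurd (h ha0.symm) (ne_of_gt hb0)
    · exact ha0
  have hab : 0 < a / b := div_pos ha0 hb0
  rw [show (2:ℝ)⁻¹ * Real.log (a / b) = Real.log (Real.sqrt (a / b)) by
        rw [Real.log_sqrt hab.le]; ring,
      Real.exp_log (Real.sqrt_pos.mpr hab)]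
  rw [show a * b = a / b * b ^ 2 by field_simp, Real.sqrt_mul hab.le,
    Real.sqrt_sq hb]

/-- `lintegral` of a product of a fixed function of the coordinates over an iid product. -/
lemma lintegral_pi_pow (μ : Measure ℕ) [IsProbabilityMeasure μ] :
    ∀ (n : ℕ) (g : ℕ → ℝ≥0∞),
      ∫⁻ x : Fin n → ℕ, ∏ i, g (x i) ∂Measure.pi (fun _ => μ) = (∫⁻ a, g a ∂μ) ^ n := by
  intro n
  induction n with
  | zero =>
    intro g
    simp
  | succ n ih =>
    intro g
    rw [← ((measurePreserving_piFinSuccAbove (fun _ : Fin (n + 1) => μ) 0).symm).lintegral_comp_emb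
        (MeasurableEquiv.measurableEmbedding _)]
    simp_rw [MeasurableEquiv.piFinSuccAbove_symm_apply, Fin.insertNthEquiv, Equiv.coe_fn_mk,
      Fin.prod_univ_succ, Fin.insertNth_zero, Fin.cons_zero, Fin.cons_succ, cast_eq]
    rw [lintegral_prod_mul (f := g) (g := fun x : Fin n → ℕ => ∏ i, g (x i))
        (Measurable.of_discrete).aemeasurable (Measurable.of_discrete).aemeasurable,
      ih g, pow_succ, mul_comm]

theorem statement12 (N : ℕ) (p q : PMF ℕ) (hac : ∀ ℓ, p ℓ = 0 ↔ q ℓ = 0) :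
    (jointLaw N p q
        {ω | 0 ≤ (∑ i, d p q (ω.2 i)) - ∑ i, d p q (ω.1 i)}).toReal ≤
      Real.exp (-(N : ℝ) * renyi p q) := by
  classical
  set a : ℕ → ℝ := fun ℓ => (p ℓ).toReal with ha_def
  set b : ℕ → ℝ := fun ℓ => (q ℓ).toReal with hb_def
  have ha : ∀ ℓ, 0 ≤ a ℓ := fun ℓ => ENNReal.toReal_nonneg
  have hb : ∀ ℓ, 0 ≤ b ℓ := fun ℓ => ENNReal.toReal_nonneg
  have hp0 : ∀ ℓ, a ℓ = 0 ↔ p ℓ = 0 := fun ℓ => by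
    rw [ha_def, ENNReal.toReal_eq_zero_iff]
    exact or_iff_left (PMF.apply_ne_top p ℓ)
  have hq0 : ∀ ℓ, b ℓ = 0 ↔ q ℓ = 0 := fun ℓ => by
    rw [hb_def, ENNReal.toReal_eq_zero_iff]
    exact or_iff_left (PMF.apply_ne_top q ℓ)
  have hzero : ∀ ℓ, a ℓ = 0 ↔ b ℓ = 0 := fun ℓ =>
    (hp0 ℓ).trans ((hac ℓ).trans (hq0 ℓ).symm)
  -- the ENNReal Bhattacharyya sum
  set S : ℝ≥0∞ := ∑' ℓ, ENNReal.ofReal (Real.sqrt (a ℓ * b ℓ)) with hS_def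
  -- `S ≤ 1`
  have hS_le_one : S ≤ 1 := by
    have hterm : ∀ ℓ, ENNReal.ofReal (Real.sqrt (a ℓ * b ℓ)) ≤ p ℓ / 2 + q ℓ / 2 := by
      intro ℓ
      have h1 : Real.sqrt (a ℓ * b ℓ) ≤ a ℓ / 2 + b ℓ / 2 := by
        nlinarith [sq_nonneg (Real.sqrt (a ℓ) - Real.sqrt (b ℓ)),
          Real.sq_sqrt (ha ℓ), Real.sq_sqrt (hb ℓ),
          Real.sqrt_mul (ha ℓ) (b ℓ), Real.sqrt_nonneg (a ℓ), Real.sqrt_nonneg (b ℓ)]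
      calc ENNReal.ofReal (Real.sqrt (a ℓ * b ℓ)) ≤ ENNReal.ofReal (a ℓ / 2 + b ℓ / 2) :=
            ENNReal.ofReal_le_ofReal h1
        _ = ENNReal.ofReal (a ℓ / 2) + ENNReal.ofReal (b ℓ / 2) :=
            ENNReal.ofReal_add (by positivity) (by positivity)
        _ = p ℓ / 2 + q ℓ / 2 := by
            rw [ENNReal.ofReal_div_of_pos two_pos, ENNReal.ofReal_div_of_pos two_pos,
              ENNReal.ofReal_toReal (PMF.apply_ne_top p ℓ),
              ENNReal.ofReal_toReal (PMF.apply_ne_top q ℓ), ENNReal.ofReal_ofNat]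
    calc S ≤ ∑' ℓ, (p ℓ / 2 + q ℓ / 2) := ENNReal.tsum_le_tsum hterm
      _ = (∑' ℓ, p ℓ) * 2⁻¹ + (∑' ℓ, q ℓ) * 2⁻¹ := by
          simp_rw [div_eq_mul_inv]
          rw [ENNReal.tsum_add, ENNReal.tsum_mul_right, ENNReal.tsum_mul_right]
      _ = 1 := by
          rw [p.tsum_coe, q.tsum_coe, one_mul, ENNReal.inv_two_add_inv_two]
  have hS_ne_top : S ≠ ∞ := (hS_le_one.trans_lt ENNReal.one_lt_top).ne
  -- real version
  have hS_toReal : S.toReal = ∑' ℓ, Real.sqrt (a ℓ * b ℓ) := by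
    rw [hS_def, ENNReal.tsum_toReal_eq (fun ℓ => ENNReal.ofReal_ne_top)]
    exact tsum_congr fun ℓ => ENNReal.toReal_ofReal (Real.sqrt_nonneg _)
  have hS_pos : 0 < S := by
    obtain ⟨ℓ, hℓ⟩ := p.support_nonempty
    have hpℓ : p ℓ ≠ 0 := hℓ
    have haℓ : 0 < a ℓ := ENNReal.toReal_pos hpℓ (PMF.apply_ne_top p ℓ)
    have hbℓ : 0 < b ℓ := by
      rcases (hb ℓ).lt_or_eq with h | h
      · exact h
      · exact absurd ((hzero ℓ).mpr h.symm) (ne_of_gt haℓ)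
    refine lt_of_lt_of_le ?_ (ENNReal.le_tsum ℓ)
    exact ENNReal.ofReal_pos.mpr (Real.sqrt_pos.mpr (mul_pos haℓ hbℓ))
  have hSr_pos : 0 < S.toReal := ENNReal.toReal_pos (ne_of_gt hS_pos) hS_ne_top
  -- the two single-coordinate integrals
  have hq_int : ∫⁻ x, ENNReal.ofReal (Real.exp (2⁻¹ * d p q x)) ∂q.toMeasure = S := by
    rw [lintegral_countable']
    refine tsum_congr fun ℓ => ?_
    rw [q.toMeasure_apply_singleton ℓ (measurableSet_singleton ℓ),
      show q ℓ = ENNReal.ofReal (b ℓ) from (ENNReal.ofReal_toReal (PMF.apply_ne_top q ℓ)).symm,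
      ← ENNReal.ofReal_mul (Real.exp_nonneg _)]
    congr 1
    exact exp_half_log_mul (ha ℓ) (hb ℓ) (fun h => (hzero ℓ).mp h)
  have hp_int : ∫⁻ x, ENNReal.ofReal (Real.exp (2⁻¹ * -d p q x)) ∂p.toMeasure = S := by
    rw [lintegral_countable']
    refine tsum_congr fun ℓ => ?_
    rw [p.toMeasure_apply_singleton ℓ (measurableSet_singleton ℓ),
      show p ℓ = ENNReal.ofReal (a ℓ) from (ENNReal.ofReal_toReal (PMF.apply_ne_top p ℓ)).symm,
      ← ENNReal.ofReal_mul (Real.exp_nonneg _)]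
    have hlog : -d p q ℓ = Real.log (b ℓ / a ℓ) := by
      rw [show b ℓ / a ℓ = (a ℓ / b ℓ)⁻¹ by rw [inv_div], Real.log_inv, d]
    congr 1
    rw [hlog, exp_half_log_mul (hb ℓ) (ha ℓ) (fun h => (hzero ℓ).mpr h), mul_comm]
  -- Markov / Chernoff step
  set A : Set ((Fin N → ℕ) × (Fin N → ℕ)) :=
    {ω | 0 ≤ (∑ i, d p q (ω.2 i)) - ∑ i, d p q (ω.1 i)} with hA_def
  set g : ((Fin N → ℕ) × (Fin N → ℕ)) → ℝ≥0∞ := fun ω =>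
    ENNReal.ofReal (Real.exp (2⁻¹ * ((∑ i, d p q (ω.2 i)) - ∑ i, d p q (ω.1 i)))) with hg_def
  have hmarkov : jointLaw N p q A ≤ ∫⁻ ω, g ω ∂jointLaw N p q := by
    have h1 : jointLaw N p q A = ∫⁻ _ in A, 1 ∂jointLaw N p q := by
      rw [setLIntegral_one]
    rw [h1]
    refine le_trans (setLIntegral_mono (Measurable.of_discrete) ?_) (setLIntegral_le_lintegral _ _)
    intro ω hω
    have h0 : (0:ℝ) ≤ 2⁻¹ * ((∑ i, d p q (ω.2 i)) - ∑ i, d p q (ω.1 i)) := by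
      have := hω
      simp only [hA_def, Set.mem_setOf_eq] at this
      positivity
    calc (1:ℝ≥0∞) = ENNReal.ofReal 1 := by simp
      _ ≤ g ω := ENNReal.ofReal_le_ofReal (by simpa using Real.one_le_exp h0)
  -- factorize g
  have hg_eq : ∀ ω, g ω = (∏ i, ENNReal.ofReal (Real.exp (2⁻¹ * -d p q (ω.1 i)))) *
      ∏ i, ENNReal.ofReal (Real.exp (2⁻¹ * d p q (ω.2 i))) := by
    intro ω
    rw [hg_def]
    simp only [← ENNReal.ofReal_prod_of_nonneg (fun i _ => Real.exp_nonneg _),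
      ← Real.exp_sum]
    rw [← ENNReal.ofReal_mul (Real.exp_nonneg _), ← Real.exp_add]
    congr 1
    rw [← Finset.mul_sum, ← Finset.mul_sum, Finset.sum_neg_distrib]
    ring
  have hfact : ∫⁻ ω, g ω ∂jointLaw N p q = S ^ N * S ^ N := by
    calc ∫⁻ ω, g ω ∂jointLaw N p q
        = ∫⁻ ω, (∏ i, ENNReal.ofReal (Real.exp (2⁻¹ * -d p q (ω.1 i)))) *
            ∏ i, ENNReal.ofReal (Real.exp (2⁻¹ * d p q (ω.2 i))) ∂jointLaw N p q := by
          exact lintegral_congr hg_eq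
      _ = (∫⁻ x : Fin N → ℕ, ∏ i, ENNReal.ofReal (Real.exp (2⁻¹ * -d p q (x i)))
            ∂Measure.pi fun _ => p.toMeasure) *
          ∫⁻ y : Fin N → ℕ, ∏ i, ENNReal.ofReal (Real.exp (2⁻¹ * d p q (y i)))
            ∂Measure.pi fun _ => q.toMeasure := by
          rw [jointLaw]
          exact lintegral_prod_mul
            (f := fun x : Fin N → ℕ => ∏ i, ENNReal.ofReal (Real.exp (2⁻¹ * -d p q (x i))))
            (g := fun y : Fin N → ℕ => ∏ i, ENNReal.ofReal (Real.exp (2⁻¹ * d p q (y i))))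
            (Measurable.of_discrete).aemeasurable (Measurable.of_discrete).aemeasurable
      _ = S ^ N * S ^ N := by
          rw [lintegral_pi_pow p.toMeasure N (fun x => ENNReal.ofReal (Real.exp (2⁻¹ * -d p q x))),
            lintegral_pi_pow q.toMeasure N (fun x => ENNReal.ofReal (Real.exp (2⁻¹ * d p q x))),
            hp_int, hq_int]
  have hbound : jointLaw N p q A ≤ S ^ N * S ^ N := hfact ▸ hmarkov
  -- pass to reals
  have hrhs_ne_top : S ^ N * S ^ N ≠ ∞ :=
    ENNReal.mul_ne_top (ENNReal.pow_ne_top hS_ne_top) (ENNReal.pow_ne_top hS_ne_top)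
  have := ENNReal.toReal_mono hrhs_ne_top hbound
  refine this.trans ?_
  rw [ENNReal.toReal_mul, ENNReal.toReal_pow]
  have hrenyi : renyi p q = -2 * Real.log S.toReal := by
    rw [renyi, hS_toReal]
  rw [hrenyi]
  have : -(N:ℝ) * (-2 * Real.log S.toReal) = ((2 * N : ℕ) : ℝ) * Real.log S.toReal := by
    push_cast; ring
  rw [this, Real.exp_nat_mul, Real.exp_log hSr_pos, two_mul, pow_add]
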